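/- There exists a constant c' > 0 such that for all x > 0 and all v ∈ [a,b] ⊂ (1/α,1), one has |Θ(x,v)| ≤ c' (1+x)^{v - 1/α - 2}, where Θ(x,v) = θ(x,v) - θ(x-1,v) and θ(x,v) = (1+v-1/α)^{-1} Σ_{l=0}^{4} d_l (x - l/2)_+^{1+v-1/α} with d_0=1, d_1=-2, d_2=0, d_3=2, d_4=-1 (so that Θ has this explicit form). -/

import Mathlib

open Real Set

lemma mvt_bound (f f' : ℝ → ℝ) {y h M : ℝ} (hh : 0 ≤ h)
    (hd : ∀ t ∈ Set.Icc (y - h) y, HasDerivAt f (f' t) t)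
    (hM : ∀ t ∈ Set.Icc (y - h) y, |f' t| ≤ M) :
    |f y - f (y - h)| ≤ M * h := by
  have := Convex.norm_image_sub_le_of_norm_hasDerivWithin_le
    (f := f) (f' := f') (s := Set.Icc (y - h) y)
    (fun t ht => (hd t ht).hasDerivWithinAt)
    (fun t ht => by simpa using hM t ht) (convex_Icc _ _)
    (Set.left_mem_Icc.2 (by linarith)) (Set.right_mem_Icc.2 (by linarith))
  have h2 : ‖y - (y - h)‖ = h := by
    rw [sub_sub_cancel, Real.norm_eq_abs, abs_of_nonneg hh]
  rw [h2] at this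
  simpa using this

lemma hasDerivAt_rpow' (p t : ℝ) (ht : 0 < t) :
    HasDerivAt (fun s : ℝ => s ^ p) (p * t ^ (p - 1)) t :=
  Real.hasDerivAt_rpow_const (Or.inl ht.ne')

lemma hasDerivAt_shift (p c t : ℝ) (ht : 0 < t - c) :
    HasDerivAt (fun s : ℝ => (s - c) ^ p) (p * (t - c) ^ (p - 1)) t := by
  have h := (hasDerivAt_rpow' p (t - c) ht).comp t ((hasDerivAt_id t).sub_const c)
  simpa [Function.comp_def] using h

/-- key third-difference bound -/
lemma key (κ x : ℝ) (hκ1 : 1 < κ) (hκ2 : κ < 2) (hx : 3 ≤ x) :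
    |x ^ κ - 2 * (x - 1/2) ^ κ + 2 * (x - 3/2) ^ κ - (x - 2) ^ κ|
      ≤ (1/2) * (x - 2) ^ (κ - 3) := by
  have hx2 : (0:ℝ) < x - 2 := by linarith
  set B : ℝ := 2 * (x - 2) ^ (κ - 3) with hB
  set E : ℝ → ℝ := fun u => κ * (κ - 1) * u ^ (κ - 2) with hE
  set D : ℝ → ℝ := fun s => κ * s ^ (κ - 1) - κ * (s - 1) ^ (κ - 1) with hD
  set F : ℝ → ℝ := fun t => (t ^ κ - (t - 1) ^ κ) - ((t - 1/2) ^ κ - (t - 1/2 - 1) ^ κ)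
    with hF
  -- inner bound
  have inner : ∀ s ∈ Set.Icc (x - 1) x, |E s - E (s - 1)| ≤ B := by
    intro s hs
    obtain ⟨hs1, hs2⟩ := hs
    have hb : |E s - E (s - 1)| ≤ B * 1 := by
      apply mvt_bound E (fun u => κ * (κ - 1) * ((κ - 2) * u ^ (κ - 2 - 1))) zero_le_one
      · intro u hu
        have hu0 : 0 < u := by have := hu.1; linarith
        exact (hasDerivAt_rpow' (κ - 2) u hu0).const_mul (κ * (κ - 1))
      · intro u hu
        have hu0 : (0:ℝ) < x - 2 := hx2
        have huc : x - 2 ≤ u := by have := hu.1; linarith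
        have hup : (0:ℝ) < u := lt_of_lt_of_le hu0 huc
        have he : κ - 2 - 1 = κ - 3 := by ring
        rw [he]
        have h1 : u ^ (κ - 3) ≤ (x - 2) ^ (κ - 3) :=
          Real.rpow_le_rpow_of_nonpos hu0 huc (by linarith)
        have h2 : |κ * (κ - 1) * ((κ - 2) * u ^ (κ - 3))|
            = κ * (κ - 1) * (2 - κ) * u ^ (κ - 3) := by
          rw [abs_mul, abs_mul, abs_mul]
          rw [abs_of_pos (by linarith : (0:ℝ) < κ),
            abs_of_pos (by linarith : (0:ℝ) < κ - 1),
            abs_of_neg (by linarith : κ - 2 < 0),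
            abs_of_pos (Real.rpow_pos_of_pos hup _)]
          ring
        rw [h2, hB]
        have ha : 0 ≤ (κ - 1) * (2 - κ) := mul_nonneg (by linarith) (by linarith)
        have h01 : (κ - 1) * (2 - κ) ≤ 1 := by nlinarith
        have hc : κ * (κ - 1) * (2 - κ) ≤ 2 := by nlinarith
        have hpos : (0:ℝ) ≤ u ^ (κ - 3) := (Real.rpow_pos_of_pos hup _).le
        calc κ * (κ - 1) * (2 - κ) * u ^ (κ - 3) ≤ 2 * u ^ (κ - 3) :=
              mul_le_mul_of_nonneg_right hc hpos
          _ ≤ 2 * (x - 2) ^ (κ - 3) := by linarith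
    simpa using hb
  -- middle bound
  have middle : ∀ t ∈ Set.Icc (x - 1/2) x, |D t - D (t - 1/2)| ≤ B * (1/2) := by
    intro t ht
    obtain ⟨ht1, ht2⟩ := ht
    apply mvt_bound D (fun s => E s - E (s - 1)) (by norm_num)
    · intro s hs
      have hs0 : 0 < s := by have := hs.1; linarith
      have hs1 : 0 < s - 1 := by have := hs.1; linarith
      have hd1 := (hasDerivAt_rpow' (κ - 1) s hs0).const_mul κ
      have hd2 := (hasDerivAt_shift (κ - 1) 1 s hs1).const_mul κ
      have hd := hd1.sub hd2
      have he : κ - 1 - 1 = κ - 2 := by ring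
      rw [he] at hd
      have : E s - E (s - 1)
          = κ * ((κ - 1) * s ^ (κ - 2)) - κ * ((κ - 1) * (s - 1) ^ (κ - 2)) := by
        rw [hE]; ring
      rw [this]
      exact hd
    · intro s hs
      exact inner s ⟨by have := hs.1; linarith, by have := hs.2; linarith⟩
  -- outer bound
  have outer : |F x - F (x - 1/2)| ≤ B * (1/2) * (1/2) := by
    apply mvt_bound F (fun t => D t - D (t - 1/2)) (by norm_num)
    · intro t ht
      have h0 : 0 < t := by have := ht.1; linarith
      have h1 : 0 < t - 1 := by have := ht.1; linarith
      have h2 : 0 < t - 1/2 := by have := ht.1; linarith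
      have h3 : 0 < t - 1/2 - 1 := by have := ht.1; linarith
      have d0 := hasDerivAt_rpow' κ t h0
      have d1 := hasDerivAt_shift κ 1 t h1
      have d2 := hasDerivAt_shift κ (1/2) t h2
      have d3 : HasDerivAt (fun s : ℝ => (s - 1/2 - 1) ^ κ)
          (κ * (t - 1/2 - 1) ^ (κ - 1)) t := by
        have := hasDerivAt_shift κ (3/2) t (by linarith)
        have e : ∀ s : ℝ, s - 3/2 = s - 1/2 - 1 := fun s => by ring
        simp only [e] at this
        exact this
      have hd := (d0.sub d1).sub (d2.sub d3)
      have : D t - D (t - 1/2)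
          = (κ * t ^ (κ - 1) - κ * (t - 1) ^ (κ - 1))
            - (κ * (t - 1/2) ^ (κ - 1) - κ * (t - 1/2 - 1) ^ (κ - 1)) := by
        rw [hD]
      rw [this]
      exact hd
    · intro t ht
      exact middle t ⟨by have := ht.1; linarith, by have := ht.2; linarith⟩
  have hFeq : F x - F (x - 1/2)
      = x ^ κ - 2 * (x - 1/2) ^ κ + 2 * (x - 3/2) ^ κ - (x - 2) ^ κ := by
    rw [hF]
    have e1 : x - 1/2 - 1 = x - 3/2 := by ring
    have e2 : x - 1/2 - 1/2 = x - 1 := by ring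
    have e3 : x - 1/2 - 1/2 - 1 = x - 2 := by ring
    simp only [e1, e2, e3]
    ring
  rw [← hFeq]
  calc |F x - F (x - 1/2)| ≤ B * (1/2) * (1/2) := outer
    _ = (1/2) * (x - 2) ^ (κ - 3) := by rw [hB]; ring

/-- `(s)_+^κ`: equals `s^κ` if `s > 0`, and `0` otherwise. -/
noncomputable def posPow (s κ : ℝ) : ℝ := if 0 < s then s ^ κ else 0

noncomputable def theta (α x v : ℝ) : ℝ :=
  (1 + v - 1/α)⁻¹ *
    (posPow (x - 1) (1 + v - 1/α) - 2 * posPow (x - 1/2) (1 + v - 1/α)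
      + posPow x (1 + v - 1/α))

noncomputable def Theta (α x v : ℝ) : ℝ := theta α x v - theta α (x - 1) v

lemma posPow_abs_le_nine {s κ : ℝ} (hs : s ≤ 3) (hκ1 : 1 ≤ κ) (hκ2 : κ ≤ 2) :
    |posPow s κ| ≤ 9 := by
  rw [posPow]
  split
  · rename_i h
    rw [abs_of_nonneg (Real.rpow_nonneg h.le _)]
    calc s ^ κ ≤ 3 ^ κ := Real.rpow_le_rpow h.le hs (by linarith)
      _ ≤ 3 ^ (2:ℝ) := Real.rpow_le_rpow_of_exponent_le (by norm_num) hκ2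
      _ = 9 := by
          rw [show (2:ℝ) = ((2:ℕ):ℝ) by norm_num, Real.rpow_natCast]; norm_num
  · norm_num

theorem stmt4 (α a b : ℝ) (hα : 1 < α ∧ α < 2) (hab : 1/α < a ∧ a < b ∧ b < 1) :
    ∃ c : ℝ, 0 < c ∧ ∀ x v : ℝ, 0 < x → v ∈ Set.Icc a b →
      |Theta α x v| ≤ c * (1 + x) ^ (v - 1/α - 2) := by
  obtain ⟨hα1, hα2⟩ := hα
  obtain ⟨ha1, hab', hb1⟩ := hab
  refine ⟨1152, by norm_num, fun x v hx hv => ?_⟩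
  obtain ⟨hva, hvb⟩ := hv
  have hαpos : (0:ℝ) < α := by linarith
  have hαinv : 1/α < 1 := by rw [div_lt_one hαpos]; linarith
  have hαinv0 : 0 < 1/α := by positivity
  set κ : ℝ := 1 + v - 1/α with hκdef
  have hκ1 : 1 < κ := by rw [hκdef]; linarith
  have hκ2 : κ < 2 := by rw [hκdef]; linarith
  have hexp : v - 1/α - 2 = κ - 3 := by rw [hκdef]; ring
  rw [hexp]
  have h1x : (0:ℝ) < 1 + x := by linarith
  have hκinv : κ⁻¹ ≤ 1 := by
    rw [inv_le_one_iff₀]; right; linarith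
  have hκinv0 : 0 < κ⁻¹ := by positivity
  by_cases hx3 : x < 3
  · -- small x : crude bound
    have hth : ∀ y : ℝ, y ≤ 3 → |theta α y v| ≤ 36 := by
      intro y hy
      rw [theta, ← hκdef, abs_mul]
      have b1 : |posPow (y - 1) κ| ≤ 9 :=
        posPow_abs_le_nine (by linarith) hκ1.le hκ2.le
      have b2 : |posPow (y - 1/2) κ| ≤ 9 :=
        posPow_abs_le_nine (by linarith) hκ1.le hκ2.le
      have b3 : |posPow y κ| ≤ 9 := posPow_abs_le_nine hy hκ1.le hκ2.le
      have habs : |posPow (y - 1) κ - 2 * posPow (y - 1/2) κ + posPow y κ| ≤ 36 := by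
        have e1 := abs_le.mp b1
        have e2 := abs_le.mp b2
        have e3 := abs_le.mp b3
        rw [abs_le]; constructor <;> [linarith [e1.1, e2.1, e2.2, e3.1];
          linarith [e1.2, e2.1, e2.2, e3.2]]
      calc |κ⁻¹| * |posPow (y - 1) κ - 2 * posPow (y - 1/2) κ + posPow y κ|
          ≤ 1 * 36 := by
            apply mul_le_mul _ habs (abs_nonneg _) zero_le_one
            rw [abs_of_pos hκinv0]; exact hκinv
        _ = 36 := by norm_num
    have hT : |Theta α x v| ≤ 72 := by
      rw [Theta]
      have e1 := abs_le.mp (hth x (by linarith))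
      have e2 := abs_le.mp (hth (x - 1) (by linarith))
      rw [abs_le]; constructor <;> linarith [e1.1, e1.2, e2.1, e2.2]
    have hrhs : (1/16 : ℝ) ≤ (1 + x) ^ (κ - 3) := by
      have s1 : (4:ℝ) ^ (κ - 3) ≤ (1 + x) ^ (κ - 3) :=
        Real.rpow_le_rpow_of_nonpos h1x (by linarith) (by linarith)
      have s2 : (4:ℝ) ^ ((-2):ℝ) ≤ (4:ℝ) ^ (κ - 3) :=
        Real.rpow_le_rpow_of_exponent_le (by norm_num) (by linarith)
      have s3 : (4:ℝ) ^ ((-2):ℝ) = 1/16 := by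
        rw [show ((-2):ℝ) = ((-2 : ℤ):ℝ) by norm_num, Real.rpow_intCast]
        norm_num
      calc (1/16:ℝ) = (4:ℝ) ^ ((-2):ℝ) := s3.symm
        _ ≤ (4:ℝ) ^ (κ - 3) := s2
        _ ≤ (1 + x) ^ (κ - 3) := s1
    calc |Theta α x v| ≤ 72 := hT
      _ = 1152 * (1/16) := by norm_num
      _ ≤ 1152 * (1 + x) ^ (κ - 3) := by
          apply mul_le_mul_of_nonneg_left hrhs (by norm_num)
  · -- large x
    push_neg at hx3
    have hx2 : (0:ℝ) < x - 2 := by linarith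
    have hpp : ∀ s : ℝ, 0 < s → posPow s κ = s ^ κ := fun s hs => if_pos hs
    have hT : Theta α x v
        = κ⁻¹ * (x ^ κ - 2 * (x - 1/2) ^ κ + 2 * (x - 3/2) ^ κ - (x - 2) ^ κ) := by
      rw [Theta, theta, theta, ← hκdef]
      rw [show x - 1 - 1 = x - 2 from by ring, show x - 1 - 1/2 = x - 3/2 from by ring]
      rw [hpp (x - 1) (by linarith), hpp (x - 1/2) (by linarith), hpp x hx,
        hpp (x - 2) hx2, hpp (x - 3/2) (by linarith)]
      ring
    have hkey := key κ x hκ1 hκ2 hx3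
    have hb : |Theta α x v| ≤ (1/2) * (x - 2) ^ (κ - 3) := by
      rw [hT, abs_mul, abs_of_pos hκinv0]
      calc κ⁻¹ * |x ^ κ - 2 * (x - 1/2) ^ κ + 2 * (x - 3/2) ^ κ - (x - 2) ^ κ|
          ≤ 1 * ((1/2) * (x - 2) ^ (κ - 3)) :=
            mul_le_mul hκinv hkey (abs_nonneg _) zero_le_one
        _ = (1/2) * (x - 2) ^ (κ - 3) := by ring
    have hcmp : (x - 2) ^ (κ - 3) ≤ 16 * (1 + x) ^ (κ - 3) := by
      have h14 : (0:ℝ) < (1 + x)/4 := by linarith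
      have hle : (1 + x)/4 ≤ x - 2 := by linarith
      have s1 : (x - 2) ^ (κ - 3) ≤ ((1 + x)/4) ^ (κ - 3) :=
        Real.rpow_le_rpow_of_nonpos h14 hle (by linarith)
      have s2 : ((1 + x)/4) ^ (κ - 3) = (1 + x) ^ (κ - 3) / 4 ^ (κ - 3) :=
        Real.div_rpow (show (0:ℝ) ≤ 1 + x by linarith) (show (0:ℝ) ≤ 4 by norm_num) (κ - 3)
      have s3 : (1/16 : ℝ) ≤ (4:ℝ) ^ (κ - 3) := by
        have t2 : (4:ℝ) ^ ((-2):ℝ) ≤ (4:ℝ) ^ (κ - 3) :=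
          Real.rpow_le_rpow_of_exponent_le (by norm_num) (by linarith)
        have t3 : (4:ℝ) ^ ((-2):ℝ) = 1/16 := by
          rw [show ((-2):ℝ) = ((-2 : ℤ):ℝ) by norm_num, Real.rpow_intCast]
          norm_num
        calc (1/16:ℝ) = (4:ℝ) ^ ((-2):ℝ) := t3.symm
          _ ≤ (4:ℝ) ^ (κ - 3) := t2
      have s4 : (1 + x) ^ (κ - 3) / 4 ^ (κ - 3) ≤ (1 + x) ^ (κ - 3) / (1/16) :=
        div_le_div_of_nonneg_left (Real.rpow_nonneg (by linarith) _) (by norm_num) s3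
      have s5 : (1 + x) ^ (κ - 3) / (1/16) = 16 * (1 + x) ^ (κ - 3) := by ring
      linarith
    have hpos : 0 ≤ (1 + x) ^ (κ - 3) := Real.rpow_nonneg h1x.le _
    calc |Theta α x v| ≤ (1/2) * (x - 2) ^ (κ - 3) := hb
      _ ≤ (1/2) * (16 * (1 + x) ^ (κ - 3)) := by linarith
      _ ≤ 1152 * (1 + x) ^ (κ - 3) := by nlinarith
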